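/- If M_1 and M_2 are matchings with |M_2| = |M_1| + 1, then the symmetric difference M_1 Δ M_2 contains at least one connected component which is an augmenting path with respect to M_1. -/

import Mathlib

variable {V : Type*} [DecidableEq V]
set_option linter.unusedSectionVars false

/-- `M` is a matching in the graph with edge set `E`: a set of edges of `E`
such that no two distinct edges share a vertex. -/
def IsMatching (E M : Finset (Sym2 V)) : Prop :=
  M ⊆ E ∧ ∀ e ∈ M, ∀ f ∈ M, e ≠ f → ∀ v, v ∈ e → v ∉ f

/-- The list of edges of the path given by the vertex list `l`. -/
def pathEdges (l : List V) : List (Sym2 V) :=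
  (l.zip l.tail).map fun p => s(p.1, p.2)

/-- `l` is (the vertex list of) an augmenting path with respect to the matching `M` in the
graph with edge set `E`: a path (distinct vertices, consecutive pairs forming edges of `E`)
with an odd number of edges, alternating between edges outside `M` (the even-indexed, in
particular the first and last) and edges of `M` (the odd-indexed), whose two endpoints are
unmatched by `M`. -/
def IsAugPath (E M : Finset (Sym2 V)) (l : List V) : Prop :=
  2 ≤ l.length ∧ l.Nodup ∧
    (∀ e ∈ pathEdges l, e ∈ E) ∧
    (pathEdges l).length % 2 = 1 ∧
    (∀ i (h : i < (pathEdges l).length), ((pathEdges l)[i] ∈ M ↔ i % 2 = 1)) ∧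
    (∀ e ∈ M, (∀ a, l.head? = some a → a ∉ e) ∧ (∀ a, l.getLast? = some a → a ∉ e))

namespace AugAux

/-! ### pathEdges basics -/

@[simp] lemma pathEdges_nil : pathEdges ([] : List V) = [] := rfl
@[simp] lemma pathEdges_single (a : V) : pathEdges [a] = [] := rfl
@[simp] lemma pathEdges_cons (a b : V) (t : List V) :
    pathEdges (a :: b :: t) = s(a, b) :: pathEdges (b :: t) := rfl

lemma length_pathEdges (l : List V) : (pathEdges l).length = l.length - 1 := by
  induction l with
  | nil => simp
  | cons a t ih =>
    cases t with
    | nil => simp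
    | cons b t => simp [pathEdges_cons] at ih ⊢; omega

lemma mem_of_mem_pathEdges {l : List V} {f : Sym2 V} (hf : f ∈ pathEdges l)
    {v : V} (hv : v ∈ f) : v ∈ l := by
  induction l with
  | nil => simp at hf
  | cons a t ih =>
    cases t with
    | nil => simp at hf
    | cons b t =>
      rw [pathEdges_cons] at hf
      rcases List.mem_cons.mp hf with h | h
      · subst h
        rcases Sym2.mem_iff.mp hv with rfl | rfl
        · exact List.mem_cons_self
        · exact List.mem_cons_of_mem _ (List.mem_cons_self)
      · exact List.mem_cons_of_mem _ (ih h)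

lemma exists_pathEdge {l : List V} (h2 : 2 ≤ l.length) {v : V} (hv : v ∈ l) :
    ∃ f ∈ pathEdges l, v ∈ f := by
  induction l with
  | nil => simp at hv
  | cons a t ih =>
    cases t with
    | nil => simp at h2
    | cons b t =>
      rw [pathEdges_cons]
      rcases List.mem_cons.mp hv with rfl | hv'
      · exact ⟨s(v, b), List.mem_cons_self, by simp⟩
      · cases t with
        | nil =>
          simp at hv'
          exact ⟨s(a, b), List.mem_cons_self, by simp [hv']⟩
        | cons c t =>
          obtain ⟨f, hf, hvf⟩ := ih (by simp) hv'
          exact ⟨f, List.mem_cons_of_mem _ hf, hvf⟩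

lemma pathEdges_concat :
    ∀ (l : List V) (h : l ≠ []) (x : V),
      pathEdges (l ++ [x]) = pathEdges l ++ [s(l.getLast h, x)] := by
  intro l
  induction l with
  | nil => intro h; exact absurd rfl h
  | cons a t ih =>
    intro h x
    cases t with
    | nil => simp [pathEdges]
    | cons b t =>
      have : (a :: b :: t) ++ [x] = a :: ((b :: t) ++ [x]) := rfl
      rw [this]
      have hbt : (b :: t) ++ [x] = b :: (t ++ [x]) := rfl
      rw [hbt, pathEdges_cons, ← hbt, ih (by simp), pathEdges_cons]
      simp [List.getLast_cons]

lemma nodup_pathEdges {l : List V} (h : l.Nodup) : (pathEdges l).Nodup := by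
  induction l with
  | nil => simp
  | cons a t ih =>
    cases t with
    | nil => simp
    | cons b t =>
      rw [pathEdges_cons]
      refine List.Nodup.cons ?_ (ih (List.Nodup.of_cons h))
      intro hmem
      have : a ∈ b :: t := mem_of_mem_pathEdges hmem (by simp)
      exact (List.nodup_cons.mp h).1 this

lemma getLast?_pathEdges_of_mem :
    ∀ (l : List V), l.Nodup → ∀ (f : Sym2 V), f ∈ pathEdges l →
      ∀ (h : l ≠ []), l.getLast h ∈ f → (pathEdges l).getLast? = some f := by
  intro l
  induction l with
  | nil => intro _ f hf; simp at hf
  | cons a t ih =>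
    intro hnd f hf h hlast
    cases t with
    | nil => simp at hf
    | cons b t =>
      rw [pathEdges_cons] at hf ⊢
      have hlast' : (a :: b :: t).getLast h = (b :: t).getLast (by simp) := by
        rw [List.getLast_cons]
      rcases List.mem_cons.mp hf with rfl | hf'
      · -- f = s(a,b); then getLast (b::t) ∈ s(a,b)
        rw [hlast'] at hlast
        have hmem : (b :: t).getLast (by simp) ∈ b :: t := List.getLast_mem _
        rcases Sym2.mem_iff.mp hlast with heq | heq
        · rw [heq] at hmem
          exact absurd hmem (List.nodup_cons.mp hnd).1
        · -- getLast (b::t) = b ; so t = []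
          cases t with
          | nil => simp [pathEdges]
          | cons c t =>
            exfalso
            have hl2 : (b :: c :: t).getLast (by simp) = (c :: t).getLast (by simp) := by
              rw [List.getLast_cons]
            rw [hl2] at heq
            have : (c :: t).getLast (by simp) ∈ c :: t := List.getLast_mem _
            rw [heq] at this
            exact ((List.nodup_cons.mp (List.Nodup.of_cons hnd)).1 this)
      · have := ih (List.Nodup.of_cons hnd) f hf' (by simp) (by rw [← hlast']; exact hlast)
        rw [show (s(a,b) :: pathEdges (b :: t)).getLast? = (pathEdges (b :: t)).getLast? from by
          cases hpe : pathEdges (b :: t) with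
          | nil => rw [hpe] at hf'; simp at hf'
          | cons c u => simp [List.getLast?_cons_cons]]
        exact this

/-! ### Sym2 / matching helpers -/

lemma unique_of_matching {E M : Finset (Sym2 V)} (hM : IsMatching E M)
    {e f : Sym2 V} {w : V} (he : e ∈ M) (hf : f ∈ M) (hwe : w ∈ e) (hwf : w ∈ f) :
    e = f := by
  by_contra hne
  exact hM.2 e he f hf hne w hwe hwf

/-- Vertex finset of an edge. -/
def eFin (e : Sym2 V) : Finset V :=
  Sym2.lift ⟨fun a b => {a, b}, fun a b => Finset.pair_comm a b⟩ e

@[simp] lemma eFin_mk (a b : V) : eFin s(a, b) = {a, b} := rfl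

lemma mem_eFin {e : Sym2 V} {v : V} : v ∈ eFin e ↔ v ∈ e := by
  induction e using Sym2.ind with
  | _ a b => simp [Sym2.mem_iff]

def vSet (M : Finset (Sym2 V)) : Finset V := M.biUnion eFin

lemma mem_vSet {M : Finset (Sym2 V)} {v : V} : v ∈ vSet M ↔ ∃ e ∈ M, v ∈ e := by
  simp [vSet, mem_eFin]

lemma card_vSet {E M : Finset (Sym2 V)} (hM : IsMatching E M)
    (hsimple : ∀ e ∈ E, ¬ e.IsDiag) : (vSet M).card = 2 * M.card := by
  rw [vSet, Finset.card_biUnion]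
  · rw [Finset.sum_congr rfl (fun e he => ?_), Finset.sum_const, smul_eq_mul, mul_comm]
    have hnd : ¬ e.IsDiag := hsimple e (hM.1 he)
    induction e using Sym2.ind with
    | _ a b =>
      have hab : a ≠ b := by simpa [Sym2.mk_isDiag_iff] using hnd
      simp [eFin_mk, hab]
  · intro e he f hf hne
    rw [Function.onFun_apply, Finset.disjoint_left]
    intro v hv hv'
    exact hM.2 e he f hf hne v (mem_eFin.mp hv) (mem_eFin.mp hv')

/-! ### counting alternate lists -/

lemma alt_count {α : Type*} [DecidableEq α] (A : Finset α) :
    ∀ (n : ℕ) (es : List α), es.length = 2 * n → es.Nodup →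
      (∀ i (h : i < es.length), es[i] ∈ A ↔ i % 2 = 0) →
      (es.toFinset ∩ A).card = n ∧ (es.toFinset \ A).card = n := by
  intro n
  induction n with
  | zero =>
    intro es hlen _ _
    have : es = [] := List.length_eq_zero_iff.mp (by omega)
    subst this; simp
  | succ n ih =>
    intro es hlen hnd hidx
    match es, hlen with
    | a :: b :: t, hlen =>
      have ha : a ∈ A := by
        have := hidx 0 (by simp); simpa using this
      have hb : b ∉ A := by
        have := hidx 1 (by simp [hlen]; omega)
        simp at this; exact this
      have ht : t.length = 2 * n := by simp at hlen; omega
      have hndt : t.Nodup := (List.nodup_cons.mp (List.nodup_cons.mp hnd).2).2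
      have hidxt : ∀ i (h : i < t.length), t[i] ∈ A ↔ i % 2 = 0 := by
        intro i h
        have h2 : i + 2 < (a :: b :: t).length := by simp; omega
        have := hidx (i + 2) h2
        simpa [Nat.add_mod_right] using this
      obtain ⟨h1, h2⟩ := ih t ht hndt hidxt
      have hanb : a ∉ b :: t := (List.nodup_cons.mp hnd).1
      have hat : a ∉ t.toFinset := by simp; intro hc; exact hanb (List.mem_cons_of_mem _ hc)
      have hbt : b ∉ t.toFinset := by simp; exact (List.nodup_cons.mp (List.nodup_cons.mp hnd).2).1
      constructor
      · have : (a :: b :: t).toFinset ∩ A = insert a (t.toFinset ∩ A) := by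
          ext x; simp [List.toFinset_cons]
          constructor
          · rintro ⟨rfl | rfl | hx, hxA⟩
            · exact Or.inl rfl
            · exact absurd hxA hb
            · exact Or.inr ⟨hx, hxA⟩
          · rintro (rfl | ⟨hx, hxA⟩)
            · exact ⟨Or.inl rfl, ha⟩
            · exact ⟨Or.inr (Or.inr hx), hxA⟩
        rw [this, Finset.card_insert_of_notMem (by simp [Finset.mem_inter]; intro h; exact absurd h (by simpa using hat)), h1]
      · have : (a :: b :: t).toFinset \ A = insert b (t.toFinset \ A) := by
          ext x; simp [List.toFinset_cons]
          constructor
          · rintro ⟨rfl | rfl | hx, hxA⟩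
            · exact absurd ha hxA
            · exact Or.inl rfl
            · exact Or.inr ⟨hx, hxA⟩
          · rintro (rfl | ⟨hx, hxA⟩)
            · exact ⟨Or.inr (Or.inl rfl), hb⟩
            · exact ⟨Or.inr (Or.inr hx), hxA⟩
        rw [this, Finset.card_insert_of_notMem (by simp [Finset.mem_sdiff]; intro h; exact absurd h (by simpa using hbt)), h2]

end AugAux


namespace AugAux

section Walk

variable {E M₁ M₂ : Finset (Sym2 V)} {v₀ : V}

/-- The matching that the `i`-th edge of the walk belongs to. -/
def cls (M₁ M₂ : Finset (Sym2 V)) (i : ℕ) : Finset (Sym2 V) :=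
  if i % 2 = 0 then M₂ else M₁

lemma cls_matching (hM₁ : IsMatching E M₁) (hM₂ : IsMatching E M₂) (i : ℕ) :
    IsMatching E (cls M₁ M₂ i) := by
  unfold cls; split <;> assumption

lemma cls_subset (M₁ M₂ : Finset (Sym2 V)) (i : ℕ) : cls M₁ M₂ i ⊆ M₁ ∪ M₂ := by
  unfold cls; split
  · exact Finset.subset_union_right
  · exact Finset.subset_union_left

lemma mem_cls_succ {f : Sym2 V} {i : ℕ} (hf : f ∈ M₁ ∪ M₂) (h : f ∉ cls M₁ M₂ i) :
    f ∈ cls M₁ M₂ (i + 1) := by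
  rcases Nat.mod_two_eq_zero_or_one i with hi | hi
  · rw [cls, if_neg (by omega)]
    rw [cls, if_pos hi] at h
    rcases Finset.mem_union.mp hf with h1 | h1
    · exact h1
    · exact absurd h1 h
  · rw [cls, if_pos (by omega)]
    rw [cls, if_neg (by omega)] at h
    rcases Finset.mem_union.mp hf with h1 | h1
    · exact absurd h1 h
    · exact h1

lemma cls_parity (hd : ∀ e ∈ M₁, e ∉ M₂) {f : Sym2 V} {i j : ℕ}
    (hi : f ∈ cls M₁ M₂ i) (hj : f ∈ cls M₁ M₂ j) : i % 2 = j % 2 := by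
  rcases Nat.mod_two_eq_zero_or_one i with h1 | h1 <;>
    rcases Nat.mod_two_eq_zero_or_one j with h2 | h2 <;>
    simp only [cls, h1, h2, if_true, if_false] at hi hj <;>
    first
      | omega
      | exact absurd hj (hd f hi)
      | exact absurd hi (hd f hj)

lemma mem_cls_even {f : Sym2 V} {i : ℕ} (hi : i % 2 = 0) (hf : f ∈ M₂) :
    f ∈ cls M₁ M₂ i := by simp [cls, hi, hf]

lemma mem_cls_odd {f : Sym2 V} {i : ℕ} (hi : i % 2 = 1) (hf : f ∈ M₁) :
    f ∈ cls M₁ M₂ i := by simp [cls, hi, hf]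

/-- Greedy alternating walk from `v₀`: distinct vertices, starting at `v₀`, with the
`i`-th edge in `cls M₁ M₂ i`, such that moreover every edge of `M₁ ∪ M₂` meeting a vertex of
the walk is an edge of the walk, except possibly one edge of the "open" class at the last
vertex. -/
def GW (M₁ M₂ : Finset (Sym2 V)) (v₀ : V) (l : List V) : Prop :=
  2 ≤ l.length ∧ l.Nodup ∧ l.head? = some v₀ ∧
    (∀ i (h : i < (pathEdges l).length), (pathEdges l)[i] ∈ cls M₁ M₂ i) ∧
    (∀ v ∈ l, ∀ f ∈ M₁ ∪ M₂, v ∈ f →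
      f ∈ pathEdges l ∨ (l.getLast? = some v ∧ f ∈ cls M₁ M₂ (pathEdges l).length))

lemma GW.edges_mem {l : List V} (hl : GW M₁ M₂ v₀ l) {f : Sym2 V}
    (hf : f ∈ pathEdges l) : f ∈ M₁ ∪ M₂ := by
  obtain ⟨i, h, rfl⟩ := List.mem_iff_getElem.mp hf
  exact cls_subset M₁ M₂ i (hl.2.2.2.1 i h)

lemma GW.length_le {l : List V} (hl : GW M₁ M₂ v₀ l) :
    l.length ≤ (M₁ ∪ M₂).card + 1 := by
  have h1 : (pathEdges l).toFinset ⊆ M₁ ∪ M₂ := fun f hf =>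
    hl.edges_mem (List.mem_toFinset.mp hf)
  have h2 := List.toFinset_card_of_nodup (nodup_pathEdges hl.2.1)
  have h3 := Finset.card_le_card h1
  have h4 := length_pathEdges l
  have h5 := hl.1
  omega

lemma GW.seed (hM₂ : IsMatching E M₂) (hsimple : ∀ e ∈ E, ¬ e.IsDiag)
    (hv₀ : ∀ e ∈ M₁, v₀ ∉ e) {e₀ : Sym2 V} (h0 : e₀ ∈ M₂) (hv : v₀ ∈ e₀) :
    ∃ x, GW M₁ M₂ v₀ [v₀, x] := by
  obtain ⟨x, rfl⟩ := Sym2.mem_iff_exists.mp hv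
  have hxv : v₀ ≠ x := by
    have := hsimple _ (hM₂.1 h0)
    simpa [Sym2.mk_isDiag_iff] using this
  refine ⟨x, by simp, by simp [hxv], rfl, ?_, ?_⟩
  · intro i h
    have hi : i = 0 := by
      have : (pathEdges [v₀, x]).length = 1 := rfl
      omega
    subst hi
    exact mem_cls_even rfl h0
  · intro v hv' f hf hvf
    have hlen1 : (pathEdges [v₀, x]).length = 1 := rfl
    have hvx : v = v₀ ∨ v = x := by simpa using hv'
    rcases hvx with h | h
    · subst h
      rcases Finset.mem_union.mp hf with h1 | h1
      · exact (hv₀ f h1 hvf).elim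
      · have hfe : f = s(v, x) := unique_of_matching hM₂ h1 h0 hvf (by simp)
        left; simp [hfe, pathEdges]
    · subst h
      rcases Finset.mem_union.mp hf with h1 | h1
      · right
        refine ⟨rfl, ?_⟩
        rw [hlen1]
        exact mem_cls_odd rfl h1
      · have hfe : f = s(v₀, v) := unique_of_matching hM₂ h1 h0 hvf (by simp)
        left; simp [hfe, pathEdges]

lemma GW.extend (hM₁ : IsMatching E M₁) (hM₂ : IsMatching E M₂)
    (hsimple : ∀ e ∈ E, ¬ e.IsDiag) (hd : ∀ e ∈ M₁, e ∉ M₂)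
    {l : List V} (hl : GW M₁ M₂ v₀ l) {w : V} (hw : l.getLast? = some w)
    {e : Sym2 V} (he : e ∈ cls M₁ M₂ (pathEdges l).length) (hwe : w ∈ e) :
    ∃ x, GW M₁ M₂ v₀ (l ++ [x]) := by
  obtain ⟨hlen, hnd, hhead, hidx, hinv⟩ := hl
  have hne : l ≠ [] := by intro h; rw [h] at hlen; simp at hlen
  have hwl : l.getLast hne = w := by
    have := List.getLast?_eq_getLast hne
    rw [this] at hw; exact Option.some.inj hw
  have hmlen := length_pathEdges l
  have hm1 : 1 ≤ (pathEdges l).length := by omega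
  have heU : e ∈ M₁ ∪ M₂ := cls_subset M₁ M₂ _ he
  have heE : e ∈ E := by
    rcases Finset.mem_union.mp heU with h | h
    · exact hM₁.1 h
    · exact hM₂.1 h
  obtain ⟨x, rfl⟩ := Sym2.mem_iff_exists.mp hwe
  have hxw : w ≠ x := by
    have := hsimple _ heE
    simpa [Sym2.mk_isDiag_iff] using this
  have hxl : x ∉ l := by
    intro hx
    rcases hinv x hx s(w, x) heU (by simp) with hmem | ⟨hx2, _⟩
    · have hpne : pathEdges l ≠ [] := by
        intro h; rw [h] at hm1; simp at hm1
      have hlast := getLast?_pathEdges_of_mem l hnd _ hmem hne (by rw [hwl]; simp)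
      have hgl : (pathEdges l).getLast hpne = s(w, x) := by
        have := List.getLast?_eq_getLast hpne
        rw [this] at hlast; exact Option.some.inj hlast
      rw [List.getLast_eq_getElem] at hgl
      have hin : s(w, x) ∈ cls M₁ M₂ ((pathEdges l).length - 1) := by
        rw [← hgl]; exact hidx _ (by omega)
      have := cls_parity hd hin he
      omega
    · exact hxw (Option.some.inj (hw.symm.trans hx2))
  have hpe : pathEdges (l ++ [x]) = pathEdges l ++ [s(w, x)] := by
    rw [pathEdges_concat l hne x, hwl]
  have hLnew : (l ++ [x]).getLast? = some x := List.getLast?_concat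
  have hlennew : (pathEdges (l ++ [x])).length = (pathEdges l).length + 1 := by
    rw [hpe]; simp
  refine ⟨x, ?_, ?_, ?_, ?_, ?_⟩
  · simp; omega
  · rw [List.nodup_append]
    exact ⟨hnd, List.nodup_singleton x, fun a ha b hb hab => hxl (by rw [List.mem_singleton] at hb; rw [← hb, ← hab]; exact ha)⟩
  · rw [List.head?_append_of_ne_nil _ hne]; exact hhead
  · intro i h
    rw [hlennew] at h
    rcases Nat.lt_or_ge i (pathEdges l).length with hi | hi
    · rw [List.getElem_of_eq hpe, List.getElem_append_left hi]
      exact hidx i hi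
    · have hieq : i = (pathEdges l).length := by omega
      rw [List.getElem_of_eq hpe, List.getElem_concat_length hieq]
      exact hieq ▸ he
  · intro v hv f hf hvf
    rcases List.mem_append.mp hv with hvl | hvx
    · rcases hinv v hvl f hf hvf with hmem | ⟨hlastv, hfc⟩
      · left; rw [hpe]; exact List.mem_append_left _ hmem
      · have hvw : v = w := Option.some.inj (hlastv.symm.trans hw)
        subst hvw
        have : f = s(v, x) :=
          unique_of_matching (cls_matching hM₁ hM₂ _) hfc he hvf (by simp)
        left; rw [hpe, this]; exact List.mem_append_right _ (by simp)
    · have hvx' : v = x := by simpa using hvx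
      subst hvx'
      by_cases hfc : f ∈ cls M₁ M₂ (pathEdges l).length
      · have : f = s(w, v) :=
          unique_of_matching (cls_matching hM₁ hM₂ _) hfc he hvf (by simp)
        left; rw [hpe, this]; exact List.mem_append_right _ (by simp)
      · right
        refine ⟨hLnew, ?_⟩
        rw [hlennew]
        exact mem_cls_succ hf hfc

lemma exists_max_walk (hM₁ : IsMatching E M₁) (hM₂ : IsMatching E M₂)
    (hsimple : ∀ e ∈ E, ¬ e.IsDiag) (hd : ∀ e ∈ M₁, e ∉ M₂)
    (hv₀ : ∀ e ∈ M₁, v₀ ∉ e) {e₀ : Sym2 V} (h0 : e₀ ∈ M₂) (hv : v₀ ∈ e₀) :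
    ∃ l w, GW M₁ M₂ v₀ l ∧ l.getLast? = some w ∧
      ∀ e ∈ cls M₁ M₂ (pathEdges l).length, w ∉ e := by
  classical
  obtain ⟨x, hx⟩ := GW.seed hM₂ hsimple hv₀ h0 hv
  have hP2 : (fun n => ∃ l, GW M₁ M₂ v₀ l ∧ l.length = n) 2 := ⟨[v₀, x], hx, rfl⟩
  have h2B : 2 ≤ (M₁ ∪ M₂).card + 1 := by
    have h := hx.length_le
    have h2 : ([v₀, x] : List V).length = 2 := rfl
    omega
  obtain ⟨l, hl, hlen⟩ := Nat.findGreatest_spec (P := fun n => ∃ l, GW M₁ M₂ v₀ l ∧ l.length = n) h2B hP2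
  have hne : l ≠ [] := by
    intro h; rw [h] at hl; exact absurd hl.1 (by simp)
  refine ⟨l, l.getLast hne, hl, List.getLast?_eq_getLast hne, ?_⟩
  intro e he hwe
  obtain ⟨x', hx'⟩ := hl.extend hM₁ hM₂ hsimple hd (List.getLast?_eq_getLast hne) he hwe
  have hble := hx'.length_le
  have hle := Nat.le_findGreatest (P := fun n => ∃ l, GW M₁ M₂ v₀ l ∧ l.length = n) (n := (M₁ ∪ M₂).card + 1) hble ⟨_, hx', rfl⟩
  have hlx : (l ++ [x']).length = l.length + 1 := by simp
  omega

end Walk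

end AugAux


namespace AugAux

lemma matching_subset {E M M' : Finset (Sym2 V)} (h : IsMatching E M) (hs : M' ⊆ M) :
    IsMatching E M' :=
  ⟨hs.trans h.1, fun e he f hf hne v hv => h.2 e (hs he) f (hs hf) hne v hv⟩

lemma head_mem_firstEdge {l : List V} {a : V} (ha : l.head? = some a)
    (h : 0 < (pathEdges l).length) : a ∈ (pathEdges l)[0] := by
  match l with
  | [] => simp at ha
  | [x] => simp at h
  | x :: y :: t =>
    have hax : a = x := by have h' := ha; simp at h'; exact h'.symm
    subst hax
    have hrfl : (pathEdges (a :: y :: t))[0] = s(a, y) := rfl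
    rw [hrfl]; simp

lemma getLast_pathEdges : ∀ (l : List V) {a : V}, l.getLast? = some a →
    ∀ (hh : pathEdges l ≠ []), a ∈ (pathEdges l).getLast hh := by
  intro l
  induction l with
  | nil => intro a ha hh; simp at hh
  | cons x t ih =>
    intro a ha hh
    cases t with
    | nil => simp at hh
    | cons y t =>
      cases t with
      | nil =>
        have hay : a = y := by have h' := ha; simp at h'; exact h'.symm
        subst hay
        simp [pathEdges]
      | cons z t =>
        have hne : pathEdges (y :: z :: t) ≠ [] := by simp [pathEdges_cons]
        have ha' : (y :: z :: t).getLast? = some a := by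
          rw [← List.getLast?_cons_cons (a := x)]; exact ha
        have hmem := ih ha' hne
        show a ∈ (s(x, y) :: pathEdges (y :: z :: t)).getLast (by simp)
        rw [List.getLast_cons hne]
        exact hmem

lemma symmDiff_eq_union {M₁ M₂ : Finset (Sym2 V)} (hd : ∀ e ∈ M₁, e ∉ M₂) (f : Sym2 V) :
    f ∈ symmDiff M₁ M₂ ↔ f ∈ M₁ ∪ M₂ := by
  have := hd f
  simp only [Finset.mem_symmDiff, Finset.mem_union]
  tauto

lemma key (E : Finset (Sym2 V)) (hsimple : ∀ e ∈ E, ¬ e.IsDiag) :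
    ∀ (n : ℕ) (M₁ M₂ : Finset (Sym2 V)), M₁.card = n →
      IsMatching E M₁ → IsMatching E M₂ → M₂.card = M₁.card + 1 →
      ∃ l : List V, IsAugPath E M₁ l ∧
        (∀ e ∈ pathEdges l, e ∈ symmDiff M₁ M₂) ∧
        (∀ e ∈ symmDiff M₁ M₂, (∃ v ∈ l, v ∈ e) → e ∈ pathEdges l) := by
  intro n
  induction n using Nat.strong_induction_on with
  | _ n IH =>
  intro M₁ M₂ hn hM₁ hM₂ hcard
  by_cases hint : ∃ e, e ∈ M₁ ∧ e ∈ M₂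
  · -- shared-edge case: erase the common edge and use the induction hypothesis
    obtain ⟨e, he1, he2⟩ := hint
    have hM₁' : IsMatching E (M₁.erase e) := matching_subset hM₁ (Finset.erase_subset e M₁)
    have hM₂' : IsMatching E (M₂.erase e) := matching_subset hM₂ (Finset.erase_subset e M₂)
    have hc1 : (M₁.erase e).card = M₁.card - 1 := Finset.card_erase_of_mem he1
    have hc2 : (M₂.erase e).card = M₂.card - 1 := Finset.card_erase_of_mem he2
    have hn1 : 0 < M₁.card := Finset.card_pos.mpr ⟨e, he1⟩
    have hΔ : symmDiff (M₁.erase e) (M₂.erase e) = symmDiff M₁ M₂ := by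
      ext f
      simp only [Finset.mem_symmDiff, Finset.mem_erase]
      constructor
      · rintro (⟨⟨hne, hf1⟩, hf2⟩ | ⟨⟨hne, hf1⟩, hf2⟩)
        · exact Or.inl ⟨hf1, fun hc => hf2 ⟨hne, hc⟩⟩
        · exact Or.inr ⟨hf1, fun hc => hf2 ⟨hne, hc⟩⟩
      · rintro (⟨hf1, hf2⟩ | ⟨hf1, hf2⟩)
        · exact Or.inl ⟨⟨fun hc => hf2 (hc ▸ he2), hf1⟩, fun hc => hf2 hc.2⟩
        · exact Or.inr ⟨⟨fun hc => hf2 (hc ▸ he1), hf1⟩, fun hc => hf2 hc.2⟩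
    obtain ⟨l, haug, hsub, habs⟩ := IH ((M₁.erase e).card) (by omega) (M₁.erase e)
      (M₂.erase e) rfl hM₁' hM₂' (by omega)
    obtain ⟨h1, h2, h3, h4, h5, h6⟩ := haug
    have hsubΔ : ∀ f ∈ pathEdges l, f ∈ symmDiff M₁ M₂ := fun f hf => hΔ ▸ hsub f hf
    have hlen1 : 0 < (pathEdges l).length := by omega
    refine ⟨l, ⟨h1, h2, h3, h4, ?_, ?_⟩, hsubΔ, fun f hf hv => habs f (hΔ.symm ▸ hf) hv⟩
    · intro i h
      have hfi := hsubΔ _ (List.getElem_mem h)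
      have h5i := h5 i h
      constructor
      · intro hm
        rcases Finset.mem_symmDiff.mp hfi with ⟨_, hnot2⟩ | ⟨_, hnot1⟩
        · have hne : (pathEdges l)[i] ≠ e := fun hc => hnot2 (hc ▸ he2)
          exact h5i.mp (Finset.mem_erase.mpr ⟨hne, hm⟩)
        · exact absurd hm hnot1
      · intro hodd
        exact Finset.mem_of_mem_erase (h5i.mpr hodd)
    · intro g hg
      constructor
      · intro a ha hag
        by_cases hge : g = e
        · subst hge
          have hf0 : a ∈ (pathEdges l)[0] := head_mem_firstEdge ha hlen1
          have hf0Δ := hsub _ (List.getElem_mem hlen1)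
          have hf0n : (pathEdges l)[0] ∉ M₁.erase g := by
            intro hc; have := (h5 0 hlen1).mp hc; simp at this
          have hf0M2 : (pathEdges l)[0] ∈ M₂.erase g := by
            rcases Finset.mem_symmDiff.mp hf0Δ with ⟨hh, _⟩ | ⟨hh, _⟩
            · exact absurd hh hf0n
            · exact hh
          have heq : (pathEdges l)[0] = g :=
            unique_of_matching hM₂ (Finset.mem_of_mem_erase hf0M2) he2 hf0 hag
          exact (Finset.mem_erase.mp hf0M2).1 heq
        · exact (h6 g (Finset.mem_erase.mpr ⟨hge, hg⟩)).1 a ha hag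
      · intro a ha hag
        by_cases hge : g = e
        · subst hge
          have hpne : pathEdges l ≠ [] := by
            intro hc; rw [hc] at hlen1; simp at hlen1
          have hfl : a ∈ (pathEdges l).getLast hpne := getLast_pathEdges l ha hpne
          rw [List.getLast_eq_getElem] at hfl
          have hklt : (pathEdges l).length - 1 < (pathEdges l).length := by omega
          have hfΔ := hsub _ (List.getElem_mem hklt)
          have hfn : (pathEdges l)[(pathEdges l).length - 1] ∉ M₁.erase g := by
            intro hc; have := (h5 _ hklt).mp hc; omega
          have hfM2 : (pathEdges l)[(pathEdges l).length - 1] ∈ M₂.erase g := by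
            rcases Finset.mem_symmDiff.mp hfΔ with ⟨hh, _⟩ | ⟨hh, _⟩
            · exact absurd hh hfn
            · exact hh
          have heq : (pathEdges l)[(pathEdges l).length - 1] = g :=
            unique_of_matching hM₂ (Finset.mem_of_mem_erase hfM2) he2 hfl hag
          exact (Finset.mem_erase.mp hfM2).1 heq
        · exact (h6 g (Finset.mem_erase.mpr ⟨hge, hg⟩)).2 a ha hag
  · -- disjoint case: build a maximal alternating walk
    have hd : ∀ e ∈ M₁, e ∉ M₂ := fun e he hc => hint ⟨e, he, hc⟩
    have hv2 : ¬ vSet M₂ ⊆ vSet M₁ := by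
      intro hsub
      have hcv := Finset.card_le_card hsub
      rw [card_vSet hM₂ hsimple, card_vSet hM₁ hsimple] at hcv
      omega
    obtain ⟨v₀, hvm2, hvm1⟩ := Finset.not_subset.mp hv2
    obtain ⟨e₀, he₀, hve₀⟩ := mem_vSet.mp hvm2
    have hv₀ : ∀ e ∈ M₁, v₀ ∉ e := fun e he hv => hvm1 (mem_vSet.mpr ⟨e, he, hv⟩)
    obtain ⟨l, w, hl, hw, hmax⟩ := exists_max_walk hM₁ hM₂ hsimple hd hv₀ he₀ hve₀
    obtain ⟨hlen, hnd, hhead, hidx, hinv⟩ := id hl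
    have hmlen := length_pathEdges l
    have hm1 : 1 ≤ (pathEdges l).length := by omega
    have hΔU := symmDiff_eq_union hd
    have hEmem : ∀ f ∈ M₁ ∪ M₂, f ∈ E := by
      intro f hf
      rcases Finset.mem_union.mp hf with h | h
      exacts [hM₁.1 h, hM₂.1 h]
    rcases Nat.mod_two_eq_zero_or_one (pathEdges l).length with hpar | hpar
    · -- even length: balanced walk, remove it and recurse
      have hwM₂ : ∀ g ∈ M₂, w ∉ g := fun g hg => hmax g (mem_cls_even hpar hg)
      have hidx2 : ∀ i (h : i < (pathEdges l).length), (pathEdges l)[i] ∈ M₂ ↔ i % 2 = 0 := by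
        intro i h
        have hi := hidx i h
        constructor
        · intro hm
          by_contra hco
          rw [cls, if_neg hco] at hi
          exact hd _ hi hm
        · intro hie; rw [cls, if_pos hie] at hi; exact hi
      obtain ⟨hcP2, hcP1⟩ := alt_count M₂ ((pathEdges l).length / 2) (pathEdges l)
        (by omega) (nodup_pathEdges hnd) hidx2
      set P := (pathEdges l).toFinset with hPdef
      have hPsub : ∀ f ∈ P, f ∈ M₁ ∪ M₂ := fun f hf => hl.edges_mem (List.mem_toFinset.mp hf)
      have hM1P : M₁ ∩ P = P \ M₂ := by
        ext f
        simp only [Finset.mem_inter, Finset.mem_sdiff]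
        constructor
        · rintro ⟨hf1, hp⟩; exact ⟨hp, hd f hf1⟩
        · rintro ⟨hp, hf2⟩
          rcases Finset.mem_union.mp (hPsub f hp) with h | h
          · exact ⟨h, hp⟩
          · exact absurd h hf2
      have hc1 : (M₁ \ P).card + ((pathEdges l).length / 2) = M₁.card := by
        have hcs := Finset.card_sdiff_add_card_inter M₁ P
        rw [hM1P, hcP1] at hcs; exact hcs
      have hc2 : (M₂ \ P).card + ((pathEdges l).length / 2) = M₂.card := by
        have hcs := Finset.card_sdiff_add_card_inter M₂ P
        rw [Finset.inter_comm, hcP2] at hcs; exact hcs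
      have hhalf1 : 1 ≤ (pathEdges l).length / 2 := by omega
      have hM₁' : IsMatching E (M₁ \ P) := matching_subset hM₁ Finset.sdiff_subset
      have hM₂' : IsMatching E (M₂ \ P) := matching_subset hM₂ Finset.sdiff_subset
      obtain ⟨l', haug', hsub', habs'⟩ := IH ((M₁ \ P).card) (by omega) (M₁ \ P) (M₂ \ P)
        rfl hM₁' hM₂' (by omega)
      have hd' : ∀ f ∈ M₁ \ P, f ∉ M₂ \ P := fun f hf hc =>
        hd f (Finset.mem_sdiff.mp hf).1 (Finset.mem_sdiff.mp hc).1
      have hΔU' := symmDiff_eq_union hd'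
      have hUP : ∀ f ∈ (M₁ \ P) ∪ (M₂ \ P), f ∈ M₁ ∪ M₂ ∧ f ∉ P := by
        intro f hf
        rcases Finset.mem_union.mp hf with h | h
        · exact ⟨Finset.mem_union_left _ (Finset.mem_sdiff.mp h).1, (Finset.mem_sdiff.mp h).2⟩
        · exact ⟨Finset.mem_union_right _ (Finset.mem_sdiff.mp h).1, (Finset.mem_sdiff.mp h).2⟩
      obtain ⟨h1, h2, h3, h4, h5, h6⟩ := haug'
      have hkey : ∀ (a : V) (f₀ : Sym2 V), f₀ ∈ M₂ \ P → a ∈ f₀ →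
          ∀ g ∈ M₁, g ∈ P → a ∉ g := by
        intro a f₀ hf₀ haf g hg hgP hag
        have hal : a ∈ l := mem_of_mem_pathEdges (List.mem_toFinset.mp hgP) hag
        have hf₀U : f₀ ∈ M₁ ∪ M₂ := Finset.mem_union_right _ (Finset.mem_sdiff.mp hf₀).1
        rcases hinv a hal f₀ hf₀U haf with hmem | ⟨hla, hfc⟩
        · exact (Finset.mem_sdiff.mp hf₀).2 (List.mem_toFinset.mpr hmem)
        · have haw : a = w := Option.some.inj (hla.symm.trans hw)
          rw [cls, if_pos hpar] at hfc
          exact hwM₂ f₀ hfc (haw ▸ haf)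
      refine ⟨l', ⟨h1, h2, h3, h4, ?_, ?_⟩, ?_, ?_⟩
      · intro i h
        have h5i := h5 i h
        have hfU := (hΔU' _).mp (hsub' _ (List.getElem_mem h))
        constructor
        · intro hm
          rcases Finset.mem_union.mp hfU with hcase | hcase
          · exact h5i.mp hcase
          · exact absurd (Finset.mem_sdiff.mp hcase).1 (hd _ hm)
        · intro hodd
          exact Finset.sdiff_subset (h5i.mpr hodd)
      · intro g hg
        have hlen0 : 0 < (pathEdges l').length := by omega
        constructor
        · intro a ha hag
          by_cases hgP : g ∈ P
          · have hf0a : a ∈ (pathEdges l')[0] := head_mem_firstEdge ha hlen0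
            have hf0U := (hΔU' _).mp (hsub' _ (List.getElem_mem hlen0))
            have hf0n : (pathEdges l')[0] ∉ M₁ \ P := by
              intro hc; have := (h5 0 hlen0).mp hc; simp at this
            have hf0M2 : (pathEdges l')[0] ∈ M₂ \ P := by
              rcases Finset.mem_union.mp hf0U with h | h
              · exact absurd h hf0n
              · exact h
            exact hkey a _ hf0M2 hf0a g hg hgP hag
          · exact (h6 g (Finset.mem_sdiff.mpr ⟨hg, hgP⟩)).1 a ha hag
        · intro a ha hag
          by_cases hgP : g ∈ P
          · have hpne : pathEdges l' ≠ [] := by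
              intro hc; rw [hc] at hlen0; simp at hlen0
            have hfl : a ∈ (pathEdges l').getLast hpne := getLast_pathEdges l' ha hpne
            rw [List.getLast_eq_getElem] at hfl
            have hklt : (pathEdges l').length - 1 < (pathEdges l').length := by omega
            have hfn : (pathEdges l')[(pathEdges l').length - 1] ∉ M₁ \ P := by
              intro hc; have := (h5 _ hklt).mp hc; omega
            have hfM2 : (pathEdges l')[(pathEdges l').length - 1] ∈ M₂ \ P := by
              have hfU := (hΔU' _).mp (hsub' _ (List.getElem_mem hklt))
              rcases Finset.mem_union.mp hfU with h | h
              · exact absurd h hfn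
              · exact h
            exact hkey a _ hfM2 hfl g hg hgP hag
          · exact (h6 g (Finset.mem_sdiff.mpr ⟨hg, hgP⟩)).2 a ha hag
      · intro f hf
        exact (hΔU f).mpr (hUP f ((hΔU' f).mp (hsub' f hf))).1
      · rintro f hf ⟨v, hvl', hvf⟩
        have hfU := (hΔU f).mp hf
        by_cases hfP : f ∈ (M₁ \ P) ∪ (M₂ \ P)
        · exact habs' f ((hΔU' f).mpr hfP) ⟨v, hvl', hvf⟩
        · exfalso
          have hfPP : f ∈ P := by
            rcases Finset.mem_union.mp hfU with h | h
            · by_contra hc; exact hfP (Finset.mem_union_left _ (Finset.mem_sdiff.mpr ⟨h, hc⟩))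
            · by_contra hc; exact hfP (Finset.mem_union_right _ (Finset.mem_sdiff.mpr ⟨h, hc⟩))
          have hvl : v ∈ l := mem_of_mem_pathEdges (List.mem_toFinset.mp hfPP) hvf
          obtain ⟨g', hg', hvg'⟩ := exists_pathEdge h1 hvl'
          obtain ⟨hg'U2, hg'P⟩ := hUP _ ((hΔU' _).mp (hsub' _ hg'))
          rcases hinv v hvl g' hg'U2 hvg' with hmem | ⟨hlv, hfc⟩
          · exact hg'P (List.mem_toFinset.mpr hmem)
          · have hvw : v = w := Option.some.inj (hlv.symm.trans hw)
            rw [cls, if_pos hpar] at hfc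
            exact hwM₂ g' hfc (hvw ▸ hvg')
    · -- odd length: the walk itself is an augmenting path
      have hwM₁ : ∀ g ∈ M₁, w ∉ g := fun g hg => hmax g (mem_cls_odd hpar hg)
      refine ⟨l, ⟨hlen, hnd, ?_, hpar, ?_, ?_⟩, ?_, ?_⟩
      · intro f hf; exact hEmem f (hl.edges_mem hf)
      · intro i h
        have hi := hidx i h
        constructor
        · intro hm
          rcases Nat.mod_two_eq_zero_or_one i with hie | hie
          · rw [cls, if_pos hie] at hi
            exact absurd hi (hd _ hm)
          · exact hie
        · intro hodd
          rw [cls, if_neg (by omega)] at hi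
          exact hi
      · intro g hg
        constructor
        · intro a ha hag
          have hav : a = v₀ := Option.some.inj (ha.symm.trans hhead)
          exact hv₀ g hg (hav ▸ hag)
        · intro a ha hag
          have haw : a = w := Option.some.inj (ha.symm.trans hw)
          exact hwM₁ g hg (haw ▸ hag)
      · intro f hf
        exact (hΔU f).mpr (hl.edges_mem hf)
      · rintro f hf ⟨v, hvl, hvf⟩
        have hfU := (hΔU f).mp hf
        rcases hinv v hvl f hfU hvf with hmem | ⟨hlv, hfc⟩
        · exact hmem
        · have hvw : v = w := Option.some.inj (hlv.symm.trans hw)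
          rw [cls, if_neg (by omega)] at hfc
          exact absurd (hvw ▸ hvf) (hwM₁ f hfc)

end AugAux

theorem symmDiff_contains_augPath (E M₁ M₂ : Finset (Sym2 V))
    (hsimple : ∀ e ∈ E, ¬ e.IsDiag)
    (hM₁ : IsMatching E M₁) (hM₂ : IsMatching E M₂)
    (hcard : M₂.card = M₁.card + 1) :
    ∃ l : List V, IsAugPath E M₁ l ∧
      (∀ e ∈ pathEdges l, e ∈ symmDiff M₁ M₂) ∧
      (∀ e ∈ symmDiff M₁ M₂, (∃ v ∈ l, v ∈ e) → e ∈ pathEdges l) :=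
  AugAux.key E hsimple M₁.card M₁ M₂ rfl hM₁ hM₂ hcard
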